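/- Let P(y) = Σ_{v∈V} P_v y_v be a linear functional with real coefficients and set ‖P‖₂ = (Σ_{v∈V} P_v²)^{1/2}. For every t ≥ 0, the occupancy process and the deterministic process started at x(0) satisfy E|P(X(t)) − P(x(t))| ≤ t·‖P‖₂ + M Σ_{s=1}^{t−1} Σ_{v∈V} |P_v| · E|X_{N_v}(s) − x_{N_v}(s)| (the double sum being empty for t ≤ 1). -/

import Mathlib

open MeasureTheory Finset

noncomputable section

/-- Real value of a Boolean state. -/
def b2r (b : Bool) : ℝ := if b then 1 else 0

/-- Neighborhood average `y_{N_v} = (deg v)⁻¹ ∑_{w ∈ N_v} y_w`. -/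
def nbrAvg {V : Type} [Fintype V] (G : SimpleGraph V) [DecidableRel G.Adj]
    (y : V → ℝ) (v : V) : ℝ :=
  (∑ w ∈ G.neighborFinset v, y w) / (G.degree v : ℝ)

/-- `γ(a,b) = a(1 - f(b)) + (1 - a) g(b)`. -/
def gam (f g : ℝ → ℝ) (a b : ℝ) : ℝ := a * (1 - f b) + (1 - a) * g b

/-- One-step transition measure of the occupancy process: from state `X`, the
coordinates of the next state are independent Bernoulli with success
probability `γ(X_v, X_{N_v})`; this is the corresponding product measure on
`V → Bool`, written out by its mass function. -/
def stepMeasure {V : Type} [Fintype V] [DecidableEq V] (G : SimpleGraph V)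
    [DecidableRel G.Adj] (f g : ℝ → ℝ) (X : V → Bool) : Measure (V → Bool) :=
  ∑ y : V → Bool,
    ENNReal.ofReal (∏ v,
        (if y v then gam f g (b2r (X v)) (nbrAvg G (fun w => b2r (X w)) v)
         else 1 - gam f g (b2r (X v)) (nbrAvg G (fun w => b2r (X w)) v)))
      • Measure.dirac y

/-- Law of the occupancy process at time `t`, started (a.s.) at `x0`. -/
def law {V : Type} [Fintype V] [DecidableEq V] (G : SimpleGraph V)
    [DecidableRel G.Adj] (f g : ℝ → ℝ) (x0 : V → Bool) : ℕ → Measure (V → Bool)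
  | 0 => Measure.dirac x0
  | t + 1 => (law G f g x0 t).bind (stepMeasure G f g)

/-- The deterministic process `x(t+1)_v = γ(x(t)_v, x(t)_{N_v})`. -/
def det {V : Type} [Fintype V] (G : SimpleGraph V) [DecidableRel G.Adj]
    (f g : ℝ → ℝ) (x0 : V → ℝ) : ℕ → V → ℝ
  | 0 => x0
  | t + 1 => fun v => gam f g (det G f g x0 t v) (nbrAvg G (det G f g x0 t) v)

set_option linter.unusedSectionVars false

namespace OccAux

variable {V : Type} [Fintype V] [DecidableEq V]
  (G : SimpleGraph V) [DecidableRel G.Adj] (f g : ℝ → ℝ) (x0 : V → Bool)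

/-- success probability of coordinate v given previous state X -/
def pr (X : V → Bool) (v : V) : ℝ :=
  gam f g (b2r (X v)) (nbrAvg G (fun w => b2r (X w)) v)

/-- one-step transition mass function -/
def ker (X y : V → Bool) : ℝ :=
  ∏ v, if y v then pr G f g X v else 1 - pr G f g X v

/-- mass function of the law at time t -/
def mass : ℕ → (V → Bool) → ℝ
  | 0 => fun y => if y = x0 then 1 else 0
  | t + 1 => fun y' => ∑ y, mass t y * ker G f g y y'

lemma b2r_mem (b : Bool) : b2r b ∈ Set.Icc (0:ℝ) 1 := by
  cases b <;> simp [b2r]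

lemma nbrAvg_mem (hdeg : ∀ v : V, 0 < G.degree v) {y : V → ℝ}
    (hy : ∀ w, y w ∈ Set.Icc (0:ℝ) 1) (v : V) :
    nbrAvg G y v ∈ Set.Icc (0:ℝ) 1 := by
  have hdv : (0:ℝ) < (G.degree v : ℝ) := by exact_mod_cast hdeg v
  unfold nbrAvg
  constructor
  · exact div_nonneg (Finset.sum_nonneg fun w _ => (hy w).1) hdv.le
  · rw [div_le_one hdv]
    calc ∑ w ∈ G.neighborFinset v, y w ≤ ∑ w ∈ G.neighborFinset v, 1 :=
          Finset.sum_le_sum fun w _ => (hy w).2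
      _ = (G.degree v : ℝ) := by simp [SimpleGraph.card_neighborFinset_eq_degree]

lemma gam_mem (hf01 : ∀ a ∈ Set.Icc (0:ℝ) 1, f a ∈ Set.Icc (0:ℝ) 1)
    (hg01 : ∀ a ∈ Set.Icc (0:ℝ) 1, g a ∈ Set.Icc (0:ℝ) 1)
    {a b : ℝ} (ha : a ∈ Set.Icc (0:ℝ) 1) (hb : b ∈ Set.Icc (0:ℝ) 1) :
    gam f g a b ∈ Set.Icc (0:ℝ) 1 := by
  obtain ⟨hf0, hf1⟩ := hf01 b hb
  obtain ⟨hg0, hg1⟩ := hg01 b hb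
  obtain ⟨ha0, ha1⟩ := ha
  constructor
  · have : 0 ≤ a * (1 - f b) := mul_nonneg ha0 (by linarith)
    have : 0 ≤ (1 - a) * g b := mul_nonneg (by linarith) hg0
    unfold gam; linarith
  · have h1 : a * (1 - f b) ≤ a * 1 := by
      apply mul_le_mul_of_nonneg_left (by linarith) ha0
    have h2 : (1 - a) * g b ≤ (1 - a) * 1 := by
      apply mul_le_mul_of_nonneg_left hg1 (by linarith)
    unfold gam; linarith


variable {G} {f g}

lemma pr_mem (hdeg : ∀ v : V, 0 < G.degree v)
    (hf01 : ∀ a ∈ Set.Icc (0:ℝ) 1, f a ∈ Set.Icc (0:ℝ) 1)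
    (hg01 : ∀ a ∈ Set.Icc (0:ℝ) 1, g a ∈ Set.Icc (0:ℝ) 1)
    (X : V → Bool) (v : V) : pr G f g X v ∈ Set.Icc (0:ℝ) 1 :=
  gam_mem f g hf01 hg01 (b2r_mem _) (nbrAvg_mem G hdeg (fun w => b2r_mem (X w)) v)

/-- Sum over all Boolean configurations of a product factorizes. -/
lemma sum_prod_pi (h : V → Bool → ℝ) :
    ∑ y : V → Bool, ∏ v, h v (y v) = ∏ v, (h v true + h v false) := by
  have : ∀ v : V, h v true + h v false = ∑ b : Bool, h v b := by
    intro v; rw [Fintype.sum_bool]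
  simp_rw [this]
  rw [Finset.prod_univ_sum]
  rw [← Fintype.piFinset_univ]

lemma ker_nonneg (hdeg : ∀ v : V, 0 < G.degree v)
    (hf01 : ∀ a ∈ Set.Icc (0:ℝ) 1, f a ∈ Set.Icc (0:ℝ) 1)
    (hg01 : ∀ a ∈ Set.Icc (0:ℝ) 1, g a ∈ Set.Icc (0:ℝ) 1)
    (X y : V → Bool) : 0 ≤ ker G f g X y := by
  apply Finset.prod_nonneg
  intro v _
  obtain ⟨h0, h1⟩ := pr_mem hdeg hf01 hg01 X v
  cases y v <;> simp_all <;> linarith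

/-- Expectation of a product functional under the kernel. -/
lemma ker_exp_prod (X : V → Bool) (h : V → Bool → ℝ) :
    ∑ y : V → Bool, ker G f g X y * ∏ v, h v (y v)
      = ∏ v, (pr G f g X v * h v true + (1 - pr G f g X v) * h v false) := by
  have key : ∀ y : V → Bool, ker G f g X y * ∏ v, h v (y v)
      = ∏ v, ((if y v then pr G f g X v else 1 - pr G f g X v) * h v (y v)) := by
    intro y; rw [ker, ← Finset.prod_mul_distrib]
  simp_rw [key]
  rw [sum_prod_pi (fun v b => (if b then pr G f g X v else 1 - pr G f g X v) * h v b)]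
  simp

lemma ker_sum_one (X : V → Bool) : ∑ y : V → Bool, ker G f g X y = 1 := by
  have := ker_exp_prod (G := G) (f := f) (g := g) X (fun _ _ => (1:ℝ))
  simpa using this

lemma mass_nonneg (hdeg : ∀ v : V, 0 < G.degree v)
    (hf01 : ∀ a ∈ Set.Icc (0:ℝ) 1, f a ∈ Set.Icc (0:ℝ) 1)
    (hg01 : ∀ a ∈ Set.Icc (0:ℝ) 1, g a ∈ Set.Icc (0:ℝ) 1)
    (t : ℕ) (y : V → Bool) : 0 ≤ mass G f g x0 t y := by
  induction t generalizing y with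
  | zero => unfold mass; positivity
  | succ t ih =>
    apply Finset.sum_nonneg
    intro z _
    exact mul_nonneg (ih z) (ker_nonneg hdeg hf01 hg01 z y)

lemma mass_sum_one (t : ℕ) : ∑ y : V → Bool, mass G f g x0 t y = 1 := by
  induction t with
  | zero => simp [mass]
  | succ t ih =>
    show ∑ y' : V → Bool, ∑ y, mass G f g x0 t y * ker G f g y y' = 1
    rw [Finset.sum_comm]
    simp_rw [← Finset.mul_sum, ker_sum_one, mul_one, ih]


lemma stepMeasure_apply (X : V → Bool) (y' : V → Bool) :
    stepMeasure G f g X {y'} = ENNReal.ofReal (ker G f g X y') := by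
  rw [stepMeasure, Measure.finset_sum_apply]
  have : ∀ y : V → Bool,
      (ENNReal.ofReal (∏ v,
        (if y v then gam f g (b2r (X v)) (nbrAvg G (fun w => b2r (X w)) v)
         else 1 - gam f g (b2r (X v)) (nbrAvg G (fun w => b2r (X w)) v)))
        • Measure.dirac y) {y'}
      = (if y = y' then ENNReal.ofReal (ker G f g X y) else 0) := by
    intro y
    rw [Measure.smul_apply, Measure.dirac_apply, smul_eq_mul]
    by_cases h : y = y'
    · simp [h, ker, pr, Set.indicator]
    · have : y ∉ ({y'} : Set (V → Bool)) := by simpa using h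
      simp [h, Set.indicator_of_notMem this]
  simp_rw [this]
  simp

lemma law_apply (hdeg : ∀ v : V, 0 < G.degree v)
    (hf01 : ∀ a ∈ Set.Icc (0:ℝ) 1, f a ∈ Set.Icc (0:ℝ) 1)
    (hg01 : ∀ a ∈ Set.Icc (0:ℝ) 1, g a ∈ Set.Icc (0:ℝ) 1)
    (t : ℕ) (y : V → Bool) :
    law G f g x0 t {y} = ENNReal.ofReal (mass G f g x0 t y) := by
  induction t generalizing y with
  | zero =>
    rw [law, Measure.dirac_apply]
    unfold mass
    by_cases h : y = x0
    · simp [h, Set.indicator]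
    · have : x0 ∉ ({y} : Set (V → Bool)) := by simp [Ne.symm h]
      simp [h, Set.indicator_of_notMem this]
  | succ t ih =>
    rw [law, Measure.bind_apply (measurableSet_singleton y)
      (measurable_of_countable _).aemeasurable, lintegral_fintype]
    simp_rw [ih, stepMeasure_apply]
    rw [show mass G f g x0 (t+1) y = ∑ z, mass G f g x0 t z * ker G f g z y from rfl]
    rw [ENNReal.ofReal_sum_of_nonneg fun z _ =>
      mul_nonneg (mass_nonneg x0 hdeg hf01 hg01 t z) (ker_nonneg hdeg hf01 hg01 z y)]
    refine Finset.sum_congr rfl fun z _ => ?_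
    rw [ENNReal.ofReal_mul (mass_nonneg x0 hdeg hf01 hg01 t z), mul_comm]


lemma law_univ (hdeg : ∀ v : V, 0 < G.degree v)
    (hf01 : ∀ a ∈ Set.Icc (0:ℝ) 1, f a ∈ Set.Icc (0:ℝ) 1)
    (hg01 : ∀ a ∈ Set.Icc (0:ℝ) 1, g a ∈ Set.Icc (0:ℝ) 1)
    (t : ℕ) : law G f g x0 t Set.univ = 1 := by
  have huniv : (Set.univ : Set (V → Bool)) = ⋃ y ∈ (Finset.univ : Finset (V → Bool)), {y} := by
    ext z; simp
  rw [huniv, measure_biUnion_finset]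
  · simp_rw [law_apply x0 hdeg hf01 hg01 t]
    rw [← ENNReal.ofReal_sum_of_nonneg fun y _ => mass_nonneg x0 hdeg hf01 hg01 t y]
    rw [mass_sum_one]
    simp
  · intro a _ b _ hab
    simp [Set.disjoint_singleton, hab]
  · intro b _; exact measurableSet_singleton b

lemma integral_law (hdeg : ∀ v : V, 0 < G.degree v)
    (hf01 : ∀ a ∈ Set.Icc (0:ℝ) 1, f a ∈ Set.Icc (0:ℝ) 1)
    (hg01 : ∀ a ∈ Set.Icc (0:ℝ) 1, g a ∈ Set.Icc (0:ℝ) 1)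
    (t : ℕ) (h : (V → Bool) → ℝ) :
    ∫ y, h y ∂ law G f g x0 t = ∑ y, mass G f g x0 t y * h y := by
  have : IsFiniteMeasure (law G f g x0 t) :=
    ⟨by rw [law_univ x0 hdeg hf01 hg01 t]; exact ENNReal.one_lt_top⟩
  rw [integral_fintype Integrable.of_finite]
  refine Finset.sum_congr rfl fun y _ => ?_
  rw [measureReal_def, law_apply x0 hdeg hf01 hg01 t, ENNReal.toReal_ofReal (mass_nonneg x0 hdeg hf01 hg01 t y)]
  simp


lemma ker_exp_lin (X : V → Bool) (v : V) :
    ∑ y : V → Bool, ker G f g X y * b2r (y v) = pr G f g X v := by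
  have h := ker_exp_prod (G := G) (f := f) (g := g) X (fun u b => if u = v then b2r b else 1)
  have hL : ∀ y : V → Bool, (∏ u, if u = v then b2r (y u) else 1) = b2r (y v) := by
    intro y
    rw [Finset.prod_eq_single v (fun u _ hu => if_neg hu) (by simp)]
    simp
  simp_rw [hL] at h
  rw [h, Finset.prod_eq_single v (fun u _ hu => by simp [if_neg hu]) (by simp)]
  simp [b2r]

lemma ker_cov (X : V → Bool) (v w : V) :
    ∑ y : V → Bool, ker G f g X y * ((b2r (y v) - pr G f g X v) * (b2r (y w) - pr G f g X w))
      = if v = w then pr G f g X v * (1 - pr G f g X v) else 0 := by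
  by_cases hvw : v = w
  · subst hvw
    have h := ker_exp_prod (G := G) (f := f) (g := g) X
      (fun u b => if u = v then (b2r b - pr G f g X v) ^ 2 else 1)
    have hL : ∀ y : V → Bool,
        (∏ u, if u = v then (b2r (y u) - pr G f g X v) ^ 2 else 1)
          = (b2r (y v) - pr G f g X v) * (b2r (y v) - pr G f g X v) := by
      intro y
      rw [Finset.prod_eq_single v (fun u _ hu => if_neg hu) (by simp)]
      simp [sq]
    simp_rw [hL] at h
    rw [h, Finset.prod_eq_single v (fun u _ hu => by simp [if_neg hu]) (by simp)]
    simp only [if_pos rfl, if_true]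
    simp [b2r]
    ring
  · have h := ker_exp_prod (G := G) (f := f) (g := g) X
      (fun u b => (if u = v then b2r b - pr G f g X v else 1)
        * (if u = w then b2r b - pr G f g X w else 1))
    have hL : ∀ y : V → Bool,
        (∏ u, (if u = v then b2r (y u) - pr G f g X v else 1)
          * (if u = w then b2r (y u) - pr G f g X w else 1))
          = (b2r (y v) - pr G f g X v) * (b2r (y w) - pr G f g X w) := by
      intro y
      rw [Finset.prod_mul_distrib,
        Finset.prod_eq_single v (fun u _ hu => if_neg hu) (by simp),
        Finset.prod_eq_single w (fun u _ hu => if_neg hu) (by simp)]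
      simp
    simp_rw [hL] at h
    rw [h, if_neg hvw]
    apply Finset.prod_eq_zero (Finset.mem_univ v)
    simp [if_neg hvw, b2r]
    ring

lemma ker_second_moment (X : V → Bool) (P : V → ℝ) :
    ∑ y : V → Bool, ker G f g X y * (∑ v, P v * (b2r (y v) - pr G f g X v)) ^ 2
      = ∑ v, P v ^ 2 * (pr G f g X v * (1 - pr G f g X v)) := by
  have expand : ∀ y : V → Bool,
      (∑ v, P v * (b2r (y v) - pr G f g X v)) ^ 2
        = ∑ v, ∑ w, (P v * P w) *
            ((b2r (y v) - pr G f g X v) * (b2r (y w) - pr G f g X w)) := by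
    intro y
    rw [sq, Finset.sum_mul_sum]
    refine Finset.sum_congr rfl fun v _ => Finset.sum_congr rfl fun w _ => by ring
  simp_rw [expand, Finset.mul_sum]
  rw [Finset.sum_comm]
  have : ∀ v : V, ∑ y : V → Bool, ∑ w, ker G f g X y * ((P v * P w) *
      ((b2r (y v) - pr G f g X v) * (b2r (y w) - pr G f g X w)))
      = P v ^ 2 * (pr G f g X v * (1 - pr G f g X v)) := by
    intro v
    rw [Finset.sum_comm]
    have hw : ∀ w : V, ∑ y : V → Bool, ker G f g X y * ((P v * P w) *
        ((b2r (y v) - pr G f g X v) * (b2r (y w) - pr G f g X w)))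
        = (P v * P w) * (if v = w then pr G f g X v * (1 - pr G f g X v) else 0) := by
      intro w
      rw [← ker_cov X v w, Finset.mul_sum]
      exact Finset.sum_congr rfl fun y _ => by ring
    simp_rw [hw]
    rw [Finset.sum_eq_single v (fun w _ hwv => by simp [if_neg (Ne.symm hwv)]) (by simp)]
    simp [sq]
  simp_rw [this]

lemma ker_abs_dev_le (hdeg : ∀ v : V, 0 < G.degree v)
    (hf01 : ∀ a ∈ Set.Icc (0:ℝ) 1, f a ∈ Set.Icc (0:ℝ) 1)
    (hg01 : ∀ a ∈ Set.Icc (0:ℝ) 1, g a ∈ Set.Icc (0:ℝ) 1)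
    (X : V → Bool) (P : V → ℝ) :
    ∑ y : V → Bool, ker G f g X y * |∑ v, P v * (b2r (y v) - pr G f g X v)|
      ≤ Real.sqrt (∑ v, P v ^ 2) := by
  set W : (V → Bool) → ℝ := fun y => ∑ v, P v * (b2r (y v) - pr G f g X v) with hW
  have hCS : (∑ y : V → Bool, ker G f g X y * |W y|) ^ 2
      ≤ (∑ y : V → Bool, ker G f g X y) * ∑ y : V → Bool, ker G f g X y * W y ^ 2 := by
    apply Finset.sum_sq_le_sum_mul_sum_of_sq_eq_mul
    · exact fun y _ => ker_nonneg hdeg hf01 hg01 X y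
    · exact fun y _ => mul_nonneg (ker_nonneg hdeg hf01 hg01 X y) (sq_nonneg _)
    · intro y _
      rw [mul_pow, sq_abs, sq (ker G f g X y)]
      ring
  rw [ker_sum_one, one_mul, ker_second_moment] at hCS
  have hvar : ∑ v, P v ^ 2 * (pr G f g X v * (1 - pr G f g X v)) ≤ ∑ v, P v ^ 2 := by
    apply Finset.sum_le_sum
    intro v _
    obtain ⟨h0, h1⟩ := pr_mem hdeg hf01 hg01 X v
    have hp1 : pr G f g X v * (1 - pr G f g X v) ≤ 1 := by nlinarith [sq_nonneg (pr G f g X v)]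
    calc P v ^ 2 * (pr G f g X v * (1 - pr G f g X v)) ≤ P v ^ 2 * 1 :=
          mul_le_mul_of_nonneg_left hp1 (sq_nonneg _)
      _ = P v ^ 2 := mul_one _
  have hnn : 0 ≤ ∑ y : V → Bool, ker G f g X y * |W y| :=
    Finset.sum_nonneg fun y _ => mul_nonneg (ker_nonneg hdeg hf01 hg01 X y) (abs_nonneg _)
  have := Real.sqrt_le_sqrt (hCS.trans hvar)
  rwa [Real.sqrt_sq hnn] at this


lemma det_mem (hdeg : ∀ v : V, 0 < G.degree v)
    (hf01 : ∀ a ∈ Set.Icc (0:ℝ) 1, f a ∈ Set.Icc (0:ℝ) 1)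
    (hg01 : ∀ a ∈ Set.Icc (0:ℝ) 1, g a ∈ Set.Icc (0:ℝ) 1)
    (t : ℕ) (v : V) : det G f g (fun w => b2r (x0 w)) t v ∈ Set.Icc (0:ℝ) 1 := by
  induction t generalizing v with
  | zero => exact b2r_mem (x0 v)
  | succ t ih =>
    exact gam_mem f g hf01 hg01 (ih v) (nbrAvg_mem G hdeg ih v)

lemma gam_decomp (a a' b b' : ℝ) :
    gam f g a b - gam f g a' b'
      = (a - a') * (1 - f b' - g b') + (- (a * (f b - f b')) + (1 - a) * (g b - g b')) := by
  unfold gam; ring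


lemma main_sum (hdeg : ∀ v : V, 0 < G.degree v) {M : ℝ}
    (hf01 : ∀ a ∈ Set.Icc (0:ℝ) 1, f a ∈ Set.Icc (0:ℝ) 1)
    (hg01 : ∀ a ∈ Set.Icc (0:ℝ) 1, g a ∈ Set.Icc (0:ℝ) 1)
    (hfLip : ∀ a ∈ Set.Icc (0:ℝ) 1, ∀ b ∈ Set.Icc (0:ℝ) 1, |f a - f b| ≤ M * |a - b|)
    (hgLip : ∀ a ∈ Set.Icc (0:ℝ) 1, ∀ b ∈ Set.Icc (0:ℝ) 1, |g a - g b| ≤ M * |a - b|)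
    (t : ℕ) (P : V → ℝ) :
    ∑ y : V → Bool, mass G f g x0 t y *
        |∑ v, P v * b2r (y v) - ∑ v, P v * det G f g (fun w => b2r (x0 w)) t v|
      ≤ (t : ℝ) * Real.sqrt (∑ v, P v ^ 2)
        + M * ∑ s ∈ Finset.Ico 1 t, ∑ v, |P v| *
            ∑ y : V → Bool, mass G f g x0 s y *
              |nbrAvg G (fun w => b2r (y w)) v
                - nbrAvg G (det G f g (fun w => b2r (x0 w)) s) v| := by
  have hM : 0 ≤ M := by
    have h01 : (0:ℝ) ∈ Set.Icc (0:ℝ) 1 := by constructor <;> norm_num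
    have h11 : (1:ℝ) ∈ Set.Icc (0:ℝ) 1 := by constructor <;> norm_num
    have := (abs_nonneg (f 0 - f 1)).trans (hfLip 0 h01 1 h11)
    simpa using this
  induction t generalizing P with
  | zero =>
    have hcollapse : ∑ y : V → Bool, mass G f g x0 0 y *
        |∑ v, P v * b2r (y v) - ∑ v, P v * det G f g (fun w => b2r (x0 w)) 0 v|
        = |∑ v, P v * b2r (x0 v) - ∑ v, P v * det G f g (fun w => b2r (x0 w)) 0 v| := by
      show (∑ y : V → Bool, (if y = x0 then (1:ℝ) else 0) * _) = _
      simp_rw [ite_mul, one_mul, zero_mul]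
      rw [Finset.sum_ite_eq' Finset.univ x0]
      simp
    rw [hcollapse]
    have : det G f g (fun w => b2r (x0 w)) 0 = fun w => b2r (x0 w) := rfl
    rw [this]
    simp
  | succ t ih =>
    set D : ℕ → V → ℝ := det G f g (fun w => b2r (x0 w)) with hD
    set S2 : ℝ := Real.sqrt (∑ v, P v ^ 2) with hS2
    have hS2nn : 0 ≤ S2 := Real.sqrt_nonneg _
    set c : ℝ := ∑ v, P v * D (t+1) v with hc
    set mbar : (V → Bool) → ℝ := fun y => ∑ v, P v * pr G f g y v with hmbar
    set Ey : V → ℝ := fun v => ∑ y : V → Bool, mass G f g x0 t y *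
        |nbrAvg G (fun w => b2r (y w)) v - nbrAvg G (D t) v| with hEy
    have hEynn : ∀ v, 0 ≤ Ey v := fun v => Finset.sum_nonneg fun y _ =>
      mul_nonneg (mass_nonneg x0 hdeg hf01 hg01 t y) (abs_nonneg _)
    -- Step 1: LHS ≤ S2 + ∑_y mass t y * |mbar y - c|
    have step1 : ∑ y' : V → Bool, mass G f g x0 (t+1) y' *
          |∑ v, P v * b2r (y' v) - c|
        ≤ S2 + ∑ y : V → Bool, mass G f g x0 t y * |mbar y - c| := by
      have hexp : ∀ y' : V → Bool, mass G f g x0 (t+1) y'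
          = ∑ y : V → Bool, mass G f g x0 t y * ker G f g y y' := fun y' => by
        simp only [mass]
      simp_rw [hexp, Finset.sum_mul]
      rw [Finset.sum_comm]
      have inner : ∀ y : V → Bool,
          ∑ y' : V → Bool, mass G f g x0 t y * ker G f g y y' * |∑ v, P v * b2r (y' v) - c|
          ≤ mass G f g x0 t y * (S2 + |mbar y - c|) := by
        intro y
        have hm := mass_nonneg x0 hdeg hf01 hg01 t y
        have : ∑ y' : V → Bool, mass G f g x0 t y * ker G f g y y' * |∑ v, P v * b2r (y' v) - c|
            = mass G f g x0 t y * ∑ y' : V → Bool, ker G f g y y' * |∑ v, P v * b2r (y' v) - c| := by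
          rw [Finset.mul_sum]; exact Finset.sum_congr rfl fun y' _ => by ring
        rw [this]
        apply mul_le_mul_of_nonneg_left _ hm
        have tri : ∀ y' : V → Bool, |∑ v, P v * b2r (y' v) - c|
            ≤ |∑ v, P v * (b2r (y' v) - pr G f g y v)| + |mbar y - c| := by
          intro y'
          have hsplit : ∑ v, P v * b2r (y' v) - c
              = (∑ v, P v * (b2r (y' v) - pr G f g y v)) + (mbar y - c) := by
            have hsum : ∑ v, P v * (b2r (y' v) - pr G f g y v)
                = (∑ v, P v * b2r (y' v)) - ∑ v, P v * pr G f g y v := by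
              rw [← Finset.sum_sub_distrib]
              exact Finset.sum_congr rfl fun v _ => by ring
            simp only [hmbar]
            rw [hsum]
            ring
          rw [hsplit]
          exact abs_add_le _ _
        calc ∑ y' : V → Bool, ker G f g y y' * |∑ v, P v * b2r (y' v) - c|
            ≤ ∑ y' : V → Bool, ker G f g y y' *
                (|∑ v, P v * (b2r (y' v) - pr G f g y v)| + |mbar y - c|) := by
              apply Finset.sum_le_sum
              intro y' _
              exact mul_le_mul_of_nonneg_left (tri y') (ker_nonneg hdeg hf01 hg01 y y')
          _ = (∑ y' : V → Bool, ker G f g y y' * |∑ v, P v * (b2r (y' v) - pr G f g y v)|)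
              + (∑ y' : V → Bool, ker G f g y y') * |mbar y - c| := by
              rw [Finset.sum_mul, ← Finset.sum_add_distrib]
              exact Finset.sum_congr rfl fun y' _ => by ring
          _ ≤ S2 + 1 * |mbar y - c| := by
              rw [ker_sum_one]
              exact add_le_add_left (ker_abs_dev_le hdeg hf01 hg01 y P) _
          _ = S2 + |mbar y - c| := by ring
      calc ∑ y : V → Bool, ∑ y', mass G f g x0 t y * ker G f g y y' * |∑ v, P v * b2r (y' v) - c|
          ≤ ∑ y : V → Bool, mass G f g x0 t y * (S2 + |mbar y - c|) :=
            Finset.sum_le_sum fun y _ => inner y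
        _ = (∑ y : V → Bool, mass G f g x0 t y) * S2
            + ∑ y : V → Bool, mass G f g x0 t y * |mbar y - c| := by
            rw [Finset.sum_mul, ← Finset.sum_add_distrib]
            exact Finset.sum_congr rfl fun y _ => by ring
        _ = S2 + ∑ y : V → Bool, mass G f g x0 t y * |mbar y - c| := by
            rw [mass_sum_one]; ring
    -- Step 2: bound the drift term
    set Q : V → ℝ := fun v => P v * (1 - f (nbrAvg G (D t) v) - g (nbrAvg G (D t) v)) with hQ
    have hQabs : ∀ v, |Q v| ≤ |P v| := by
      intro v
      have hb' : nbrAvg G (D t) v ∈ Set.Icc (0:ℝ) 1 :=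
        nbrAvg_mem G hdeg (fun w => det_mem x0 hdeg hf01 hg01 t w) v
      obtain ⟨hf0, hf1⟩ := hf01 _ hb'
      obtain ⟨hg0, hg1⟩ := hg01 _ hb'
      rw [hQ]
      simp only [abs_mul]
      have : |1 - f (nbrAvg G (D t) v) - g (nbrAvg G (D t) v)| ≤ 1 := by
        rw [abs_le]; constructor <;> linarith
      calc |P v| * |1 - f (nbrAvg G (D t) v) - g (nbrAvg G (D t) v)| ≤ |P v| * 1 :=
            mul_le_mul_of_nonneg_left this (abs_nonneg _)
        _ = |P v| := mul_one _
    have hQsq : Real.sqrt (∑ v, Q v ^ 2) ≤ S2 := by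
      rw [hS2]
      apply Real.sqrt_le_sqrt
      apply Finset.sum_le_sum
      intro v _
      rw [← sq_abs (Q v), ← sq_abs (P v)]
      exact pow_le_pow_left₀ (abs_nonneg _) (hQabs v) 2
    -- per-y drift bound
    have drift : ∀ y : V → Bool, |mbar y - c|
        ≤ |∑ v, Q v * b2r (y v) - ∑ v, Q v * D t v|
          + M * ∑ v, |P v| * |nbrAvg G (fun w => b2r (y w)) v - nbrAvg G (D t) v| := by
      intro y
      have hdecomp : mbar y - c
          = (∑ v, Q v * b2r (y v) - ∑ v, Q v * D t v)
            + ∑ v, P v * (- (b2r (y v) * (f (nbrAvg G (fun w => b2r (y w)) v) - f (nbrAvg G (D t) v)))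
                + (1 - b2r (y v)) * (g (nbrAvg G (fun w => b2r (y w)) v) - g (nbrAvg G (D t) v))) := by
        have hc' : c = ∑ v, P v * gam f g (D t v) (nbrAvg G (D t) v) := by
          rw [hc]
          exact Finset.sum_congr rfl fun v _ => by rw [hD]; rfl
        rw [hmbar, hc']
        simp only []
        rw [← Finset.sum_sub_distrib, ← Finset.sum_sub_distrib, ← Finset.sum_add_distrib]
        apply Finset.sum_congr rfl
        intro v _
        have hgd := gam_decomp (f := f) (g := g) (b2r (y v)) (D t v)
          (nbrAvg G (fun w => b2r (y w)) v) (nbrAvg G (D t) v)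
        have hpr : pr G f g y v = gam f g (b2r (y v)) (nbrAvg G (fun w => b2r (y w)) v) := rfl
        rw [hpr, hQ]
        linear_combination P v * hgd
      rw [hdecomp]
      refine (abs_add_le _ _).trans (add_le_add le_rfl ?_)
      refine (Finset.abs_sum_le_sum_abs _ _).trans ?_
      rw [Finset.mul_sum]
      apply Finset.sum_le_sum
      intro v _
      set a : ℝ := b2r (y v) with ha
      set bb : ℝ := nbrAvg G (fun w => b2r (y w)) v with hbb
      set bb' : ℝ := nbrAvg G (D t) v with hbb'
      have hbbm : bb ∈ Set.Icc (0:ℝ) 1 := nbrAvg_mem G hdeg (fun w => b2r_mem (y w)) v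
      have hbbm' : bb' ∈ Set.Icc (0:ℝ) 1 :=
        nbrAvg_mem G hdeg (fun w => det_mem x0 hdeg hf01 hg01 t w) v
      obtain ⟨ha0, ha1⟩ := b2r_mem (y v)
      rw [← ha] at ha0 ha1
      have hfl := hfLip bb hbbm bb' hbbm'
      have hgl := hgLip bb hbbm bb' hbbm'
      have hR : |(- (a * (f bb - f bb')) + (1 - a) * (g bb - g bb'))| ≤ M * |bb - bb'| := by
        calc |(- (a * (f bb - f bb')) + (1 - a) * (g bb - g bb'))|
            ≤ |a * (f bb - f bb')| + |(1 - a) * (g bb - g bb')| := by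
              refine (abs_add_le _ _).trans ?_
              rw [abs_neg]
          _ = a * |f bb - f bb'| + (1 - a) * |g bb - g bb'| := by
              rw [abs_mul, abs_mul, abs_of_nonneg ha0,
                abs_of_nonneg (show (0:ℝ) ≤ 1 - a by linarith)]
          _ ≤ a * (M * |bb - bb'|) + (1 - a) * (M * |bb - bb'|) := by
              apply add_le_add
              · exact mul_le_mul_of_nonneg_left hfl ha0
              · exact mul_le_mul_of_nonneg_left hgl (by linarith)
          _ = M * |bb - bb'| := by ring
      rw [abs_mul]
      calc |P v| * |(- (a * (f bb - f bb')) + (1 - a) * (g bb - g bb'))|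
          ≤ |P v| * (M * |bb - bb'|) := mul_le_mul_of_nonneg_left hR (abs_nonneg _)
        _ = M * (|P v| * |bb - bb'|) := by ring
    -- Step 3: integrate the drift bound and apply the inductive hypothesis
    have step2 : ∑ y : V → Bool, mass G f g x0 t y * |mbar y - c|
        ≤ (t : ℝ) * S2
          + M * ∑ s ∈ Finset.Ico 1 t, ∑ v, |P v| *
              ∑ y : V → Bool, mass G f g x0 s y *
                |nbrAvg G (fun w => b2r (y w)) v - nbrAvg G (D s) v|
          + M * ∑ v, |P v| * Ey v := by
      have hsplit2 : ∑ y : V → Bool, mass G f g x0 t y * |mbar y - c|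
          ≤ (∑ y : V → Bool, mass G f g x0 t y * |∑ v, Q v * b2r (y v) - ∑ v, Q v * D t v|)
            + ∑ y : V → Bool, mass G f g x0 t y *
                (M * ∑ v, |P v| * |nbrAvg G (fun w => b2r (y w)) v - nbrAvg G (D t) v|) := by
        rw [← Finset.sum_add_distrib]
        apply Finset.sum_le_sum
        intro y _
        rw [← mul_add]
        exact mul_le_mul_of_nonneg_left (drift y) (mass_nonneg x0 hdeg hf01 hg01 t y)
      have hIH := ih Q
      have hIH' : ∑ y : V → Bool, mass G f g x0 t y *
            |∑ v, Q v * b2r (y v) - ∑ v, Q v * D t v|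
          ≤ (t : ℝ) * S2
            + M * ∑ s ∈ Finset.Ico 1 t, ∑ v, |P v| *
                ∑ y : V → Bool, mass G f g x0 s y *
                  |nbrAvg G (fun w => b2r (y w)) v - nbrAvg G (D s) v| := by
        refine hIH.trans (add_le_add ?_ ?_)
        · exact mul_le_mul_of_nonneg_left hQsq (Nat.cast_nonneg t)
        · apply mul_le_mul_of_nonneg_left _ hM
          apply Finset.sum_le_sum
          intro s _
          apply Finset.sum_le_sum
          intro v _
          apply mul_le_mul_of_nonneg_right (hQabs v)
          exact Finset.sum_nonneg fun y _ =>
            mul_nonneg (mass_nonneg x0 hdeg hf01 hg01 s y) (abs_nonneg _)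
      have hswap : ∑ y : V → Bool, mass G f g x0 t y *
            (M * ∑ v, |P v| * |nbrAvg G (fun w => b2r (y w)) v - nbrAvg G (D t) v|)
          = M * ∑ v, |P v| * Ey v := by
        simp_rw [hEy, Finset.mul_sum]
        rw [Finset.sum_comm]
        apply Finset.sum_congr rfl
        intro v _
        apply Finset.sum_congr rfl
        intro y _
        ring
      rw [hswap] at hsplit2
      linarith [hsplit2, hIH']
    -- Step 4: assemble
    have hlast : M * ∑ v, |P v| * Ey v
          + M * ∑ s ∈ Finset.Ico 1 t, ∑ v, |P v| *
              ∑ y : V → Bool, mass G f g x0 s y *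
                |nbrAvg G (fun w => b2r (y w)) v - nbrAvg G (D s) v|
        ≤ M * ∑ s ∈ Finset.Ico 1 (t+1), ∑ v, |P v| *
              ∑ y : V → Bool, mass G f g x0 s y *
                |nbrAvg G (fun w => b2r (y w)) v - nbrAvg G (D s) v| := by
      rcases Nat.eq_zero_or_pos t with ht0 | ht1
      · subst ht0
        have hEy0 : ∀ v, Ey v = 0 := by
          intro v
          rw [hEy]
          simp only []
          have hz : ∀ y : V → Bool, mass G f g x0 0 y *
              |nbrAvg G (fun w => b2r (y w)) v - nbrAvg G (D 0) v|
              = 0 := by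
            intro y
            by_cases h : y = x0
            · subst h
              have : nbrAvg G (fun w => b2r (y w)) v = nbrAvg G (D 0) v := rfl
              rw [this]
              simp
            · show (if y = x0 then (1:ℝ) else 0) * _ = 0
              rw [if_neg h, zero_mul]
          rw [Finset.sum_congr rfl fun y _ => hz y]
          simp
        simp [hEy0]
      · rw [Finset.sum_Ico_succ_top ht1, mul_add]
        ring_nf
        exact (add_comm _ _).le
    calc ∑ y' : V → Bool, mass G f g x0 (t+1) y' *
          |∑ v, P v * b2r (y' v) - ∑ v, P v * D (t+1) v|
        ≤ S2 + ∑ y : V → Bool, mass G f g x0 t y * |mbar y - c| := step1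
      _ ≤ S2 + ((t : ℝ) * S2
          + M * ∑ s ∈ Finset.Ico 1 t, ∑ v, |P v| *
              ∑ y : V → Bool, mass G f g x0 s y *
                |nbrAvg G (fun w => b2r (y w)) v - nbrAvg G (D s) v|
          + M * ∑ v, |P v| * Ey v) := by linarith [step2]
      _ ≤ ((t:ℕ)+1 : ℝ) * S2 + M * ∑ s ∈ Finset.Ico 1 (t+1), ∑ v, |P v| *
              ∑ y : V → Bool, mass G f g x0 s y *
                |nbrAvg G (fun w => b2r (y w)) v - nbrAvg G (D s) v| := by
          linarith [hlast]
      _ = ((t+1 : ℕ) : ℝ) * S2 + M * ∑ s ∈ Finset.Ico 1 (t+1), ∑ v, |P v| *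
              ∑ y : V → Bool, mass G f g x0 s y *
                |nbrAvg G (fun w => b2r (y w)) v - nbrAvg G (D s) v| := by
          push_cast; ring

end OccAux


/-- **Lemma 2.2**: multi-step bound for a linear functional `P(y) = ∑_v P_v y_v`. -/
theorem linear_functional_multi_step_bound
    {V : Type} [Fintype V] [DecidableEq V]
    (G : SimpleGraph V) [DecidableRel G.Adj]
    (hdeg : ∀ v : V, 0 < G.degree v)
    (f g : ℝ → ℝ) (M : ℝ)
    (hf01 : ∀ a ∈ Set.Icc (0:ℝ) 1, f a ∈ Set.Icc (0:ℝ) 1)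
    (hg01 : ∀ a ∈ Set.Icc (0:ℝ) 1, g a ∈ Set.Icc (0:ℝ) 1)
    (hfLip : ∀ a ∈ Set.Icc (0:ℝ) 1, ∀ b ∈ Set.Icc (0:ℝ) 1, |f a - f b| ≤ M * |a - b|)
    (hgLip : ∀ a ∈ Set.Icc (0:ℝ) 1, ∀ b ∈ Set.Icc (0:ℝ) 1, |g a - g b| ≤ M * |a - b|)
    (x0 : V → Bool) (P : V → ℝ) (t : ℕ) :
    ∫ y, |∑ v, P v * b2r (y v) - ∑ v, P v * det G f g (fun w => b2r (x0 w)) t v|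
        ∂ (law G f g x0 t)
      ≤ (t : ℝ) * Real.sqrt (∑ v, P v ^ 2)
        + M * ∑ s ∈ Finset.Ico 1 t, ∑ v, |P v| *
            ∫ y, |nbrAvg G (fun w => b2r (y w)) v
                  - nbrAvg G (det G f g (fun w => b2r (x0 w)) s) v| ∂ (law G f g x0 s) := by
  simp only [OccAux.integral_law x0 hdeg hf01 hg01]
  exact OccAux.main_sum x0 hdeg hf01 hg01 hfLip hgLip t P

end
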